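/- Let p, e be distinct points in the plane, 0 < ρ < 1, and let A = {X : dist(X,e) = ρ·dist(X,p)} be the Apollonius circle. Then the point T = e + (ρ/(1+ρ))·(p - e) lies on A, and for every X ∈ A, dist(e, T) ≤ dist(e, X); moreover dist(e,T) = ρ·dist(p,e)/(1+ρ). -/

import Mathlib

theorem apollonius_nearest_point
    (p e : EuclideanSpace ℝ (Fin 2)) (ρ : ℝ)
    (hpe : p ≠ e) (hρ0 : 0 < ρ) (hρ1 : ρ < 1) :
    let A := {X : EuclideanSpace ℝ (Fin 2) | dist X e = ρ * dist X p}
    let T := e + (ρ / (1 + ρ)) • (p - e)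
    T ∈ A ∧ (∀ X ∈ A, dist e T ≤ dist e X) ∧
      dist e T = ρ * dist p e / (1 + ρ) := by
  intro A T
  have h1ρ : (0:ℝ) < 1 + ρ := by linarith
  have hTe : dist T e = ρ / (1 + ρ) * ‖p - e‖ := by
    rw [dist_eq_norm]
    have : T - e = (ρ / (1 + ρ)) • (p - e) := by simp [T]
    rw [this, norm_smul, Real.norm_eq_abs, abs_of_nonneg (by positivity)]
  have hTp : dist T p = 1 / (1 + ρ) * ‖p - e‖ := by
    rw [dist_eq_norm]
    have : T - p = (ρ / (1 + ρ) - 1) • (p - e) := by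
      simp only [T]; module
    rw [this, norm_smul, Real.norm_eq_abs]
    have : ρ / (1 + ρ) - 1 = -(1 / (1 + ρ)) := by field_simp; ring
    rw [this, abs_neg, abs_of_nonneg (by positivity)]
  have hd : dist p e = ‖p - e‖ := dist_eq_norm p e
  refine ⟨?_, ?_, ?_⟩
  · show dist T e = ρ * dist T p
    rw [hTe, hTp]; ring
  · intro X hX
    have hX' : dist X e = ρ * dist X p := hX
    have htri : dist p e ≤ dist p X + dist X e := dist_triangle p X e
    have hpx : dist p X = dist X p := dist_comm p X
    have heT : dist e T = ρ / (1 + ρ) * ‖p - e‖ := by rw [dist_comm, hTe]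
    have heX : dist e X = dist X e := dist_comm e X
    have hXp0 : 0 ≤ dist X p := dist_nonneg
    rw [heT, heX, ← hd]
    rw [div_mul_eq_mul_div, div_le_iff₀ h1ρ]
    nlinarith [hX', htri, hpx]
  · rw [dist_comm, hTe, hd]; ring
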